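/- For the sampling-without-replacement game with ν₁ + ν₂ ≥ N, the backward-induction price satisfies η̄(0,0) = Σ_{m=max(0,N-ν₂)}^{min(ν₁,N)} η(m) · C(ν₁, m)·C(ν₂, N-m)/C(ν₁+ν₂, N), i.e., the game price of a European payoff η(S_N) is the hypergeometric expectation of η. -/

import Mathlib

lemma aux_nat (a m : ℕ) : a * (a-1).choose m = (m+1) * a.choose (m+1) := by
  cases a with
  | zero => simp
  | succ a =>
    have := Nat.add_one_mul_choose_eq a m
    simpa [Nat.succ_sub_one, mul_comm] using this

lemma hyper_step (a b K : ℕ) (hK : 1 ≤ K) (hT : K ≤ a + b) (f : ℕ → ℝ) :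
    ((a : ℝ) / (a + b : ℕ)) * ∑ m ∈ Finset.range K,
        f (m+1) * ((a-1).choose m * ((b.choose (K-1-m) : ℕ)) / ((a+b-1).choose (K-1) : ℕ) : ℝ)
      + ((b : ℝ) / (a + b : ℕ)) * ∑ m ∈ Finset.range K,
        f m * ((a.choose m : ℕ) * ((b-1).choose (K-1-m) : ℕ) / ((a+b-1).choose (K-1) : ℕ) : ℝ)
    = ∑ m ∈ Finset.range (K+1),
        f m * ((a.choose m : ℕ) * (b.choose (K-m) : ℕ) / ((a+b).choose K : ℕ) : ℝ) := by
  have hT0 : 0 < a + b := lt_of_lt_of_le hK hT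
  have hDpos : (0:ℝ) < ((a+b).choose K : ℕ) := by exact_mod_cast Nat.choose_pos hT
  have hD'pos : (0:ℝ) < (((a+b-1).choose (K-1) : ℕ) : ℝ) := by
    have : K - 1 ≤ a + b - 1 := by omega
    exact_mod_cast Nat.choose_pos this
  have hTpos : (0:ℝ) < ((a+b : ℕ) : ℝ) := by exact_mod_cast hT0
  have hkey : (K : ℝ) * ((a+b).choose K : ℕ) = ((a+b : ℕ) : ℝ) * ((a+b-1).choose (K-1) : ℕ) := by
    have h := Nat.add_one_mul_choose_eq (a+b-1) (K-1)
    have e1 : a + b - 1 + 1 = a + b := by omega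
    have e2 : K - 1 + 1 = K := by omega
    have hn : (a+b) * ((a+b-1).choose (K-1)) = (a+b).choose K * K := by
      simpa [Nat.succ_eq_add_one, e1, e2] using h
    have hn2 : K * ((a+b).choose K) = (a+b) * ((a+b-1).choose (K-1)) := by
      rw [hn, Nat.mul_comm]
    exact_mod_cast hn2
  have h1 : ((a : ℝ) / (a + b : ℕ)) * ∑ m ∈ Finset.range K,
        f (m+1) * ((a-1).choose m * ((b.choose (K-1-m) : ℕ)) / ((a+b-1).choose (K-1) : ℕ) : ℝ)
      = ∑ m ∈ Finset.range (K+1),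
        f m * ((m : ℝ) * (a.choose m : ℕ) * (b.choose (K-m) : ℕ) / (((a+b:ℕ):ℝ) * ((a+b-1).choose (K-1) : ℕ))) := by
    rw [Finset.sum_range_succ', Finset.mul_sum]
    simp only [Nat.cast_zero, zero_mul, mul_zero, zero_div, add_zero]
    refine Finset.sum_congr rfl fun m hm => ?_
    have e3 : K - 1 - m = K - (m+1) := by omega
    have cast1 : (a:ℝ) * (((a-1).choose m : ℕ) : ℝ) = (((m+1:ℕ)):ℝ) * ((a.choose (m+1) : ℕ) : ℝ) := by
      exact_mod_cast aux_nat a m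
    rw [e3]
    calc ((a : ℝ) / (a + b : ℕ)) * (f (m+1) * ((a-1).choose m * ((b.choose (K-(m+1)) : ℕ)) / ((a+b-1).choose (K-1) : ℕ) : ℝ))
        = f (m+1) * (((a:ℝ) * (((a-1).choose m : ℕ) : ℝ)) * ((b.choose (K-(m+1)) : ℕ) : ℝ) / (((a+b:ℕ):ℝ) * ((a+b-1).choose (K-1) : ℕ))) := by
          ring
      _ = f (m+1) * (((((m+1:ℕ)):ℝ) * ((a.choose (m+1) : ℕ) : ℝ)) * ((b.choose (K-(m+1)) : ℕ) : ℝ) / (((a+b:ℕ):ℝ) * ((a+b-1).choose (K-1) : ℕ))) := by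
          rw [cast1]
      _ = _ := by ring
  have h2 : ((b : ℝ) / (a + b : ℕ)) * ∑ m ∈ Finset.range K,
        f m * ((a.choose m : ℕ) * ((b-1).choose (K-1-m) : ℕ) / ((a+b-1).choose (K-1) : ℕ) : ℝ)
      = ∑ m ∈ Finset.range (K+1),
        f m * (((K-m : ℕ) : ℝ) * (a.choose m : ℕ) * (b.choose (K-m) : ℕ) / (((a+b:ℕ):ℝ) * ((a+b-1).choose (K-1) : ℕ))) := by
    rw [Finset.sum_range_succ, Finset.mul_sum]
    simp only [Nat.sub_self, Nat.cast_zero, zero_mul, mul_zero, zero_div, add_zero]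
    refine Finset.sum_congr rfl fun m hm => ?_
    have hmK : m < K := Finset.mem_range.mp hm
    have e5 : K - 1 - m + 1 = K - m := by omega
    have cast2 : (b:ℝ) * (((b-1).choose (K-1-m) : ℕ) : ℝ) = (((K-m : ℕ)) : ℝ) * ((b.choose (K-m) : ℕ) : ℝ) := by
      have h := aux_nat b (K-1-m)
      rw [e5] at h
      exact_mod_cast h
    calc ((b : ℝ) / (a + b : ℕ)) * (f m * ((a.choose m : ℕ) * ((b-1).choose (K-1-m) : ℕ) / ((a+b-1).choose (K-1) : ℕ) : ℝ))
        = f m * (((b:ℝ) * (((b-1).choose (K-1-m) : ℕ) : ℝ)) * ((a.choose m : ℕ) : ℝ) / (((a+b:ℕ):ℝ) * ((a+b-1).choose (K-1) : ℕ))) := by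
          ring
      _ = f m * ((((K-m : ℕ) : ℝ) * ((b.choose (K-m) : ℕ) : ℝ)) * ((a.choose m : ℕ) : ℝ) / (((a+b:ℕ):ℝ) * ((a+b-1).choose (K-1) : ℕ))) := by
          rw [cast2]
      _ = _ := by ring
  rw [h1, h2, ← Finset.sum_add_distrib]
  refine Finset.sum_congr rfl fun m hm => ?_
  have hmK : m ≤ K := Nat.lt_succ_iff.mp (Finset.mem_range.mp hm)
  have e7 : ((m:ℝ)) + ((K-m : ℕ) : ℝ) = (K : ℝ) := by
    have h : m + (K - m) = K := by omega
    exact_mod_cast h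
  have hdiv : ((K:ℝ)) / (((a+b:ℕ):ℝ) * ((a+b-1).choose (K-1) : ℕ)) = 1 / ((a+b).choose K : ℕ) := by
    rw [div_eq_div_iff (by positivity) hDpos.ne']
    linarith [hkey]
  calc f m * ((m : ℝ) * (a.choose m : ℕ) * (b.choose (K-m) : ℕ) / (((a+b:ℕ):ℝ) * ((a+b-1).choose (K-1) : ℕ)))
      + f m * (((K-m : ℕ) : ℝ) * (a.choose m : ℕ) * (b.choose (K-m) : ℕ) / (((a+b:ℕ):ℝ) * ((a+b-1).choose (K-1) : ℕ)))
      = f m * ((a.choose m : ℕ) * (b.choose (K-m) : ℕ)) * (((m:ℝ) + ((K-m:ℕ):ℝ)) / (((a+b:ℕ):ℝ) * ((a+b-1).choose (K-1) : ℕ))) := by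
        ring
    _ = f m * ((a.choose m : ℕ) * (b.choose (K-m) : ℕ)) * (((K:ℝ)) / (((a+b:ℕ):ℝ) * ((a+b-1).choose (K-1) : ℕ))) := by
        rw [e7]
    _ = f m * ((a.choose m : ℕ) * (b.choose (K-m) : ℕ) / ((a+b).choose K : ℕ) : ℝ) := by
        rw [hdiv]; ring

theorem stmt_7 (ν₁ ν₂ N : ℕ) (hν₁ : 0 < ν₁) (hν₂ : 0 < ν₂) (hN : 0 < N)
    (hsum : ν₁ + ν₂ ≥ N) (η : ℤ → ℝ)
    (ηbar : ℕ → ℤ → ℝ)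
    (hterm : ∀ s : ℤ, ηbar N s = η s)
    (hrec : ∀ n < N, ∀ s : ℤ, 0 ≤ s → s ≤ n →
      ηbar n s =
        (max 0 ((ν₁ : ℝ) - s) / ((ν₁ : ℝ) + ν₂ - n)) * ηbar (n + 1) (s + 1) +
        (1 - max 0 ((ν₁ : ℝ) - s) / ((ν₁ : ℝ) + ν₂ - n)) * ηbar (n + 1) s) :
    ηbar 0 0 = ∑ m ∈ Finset.Icc (N - ν₂) (min ν₁ N),
      η m * ((ν₁.choose m : ℝ) * (ν₂.choose (N - m) : ℝ) / ((ν₁ + ν₂).choose N : ℝ)) := by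
  have main : ∀ k n : ℕ, n + k = N → ∀ s : ℕ, s ≤ n → s ≤ ν₁ → n - s ≤ ν₂ →
      ηbar n (s : ℤ) = ∑ m ∈ Finset.range (N - n + 1),
        η ((s + m : ℕ) : ℤ) *
          (((ν₁ - s).choose m : ℝ) * (((ν₂ - (n - s)).choose (N - n - m) : ℕ) : ℝ) /
            (((ν₁ + ν₂ - n).choose (N - n) : ℕ) : ℝ)) := by
    intro k
    induction k with
    | zero =>
      intro n hn s hs1 hs2 hs3
      have hnN : n = N := by omega
      subst hnN
      simp [hterm]
    | succ k ih =>
      intro n hn s hs1 hs2 hs3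
      have hnN : n < N := by omega
      set a := ν₁ - s with ha
      set b := ν₂ - (n - s) with hb
      set K := N - n with hKdef
      have hab : a + b = ν₁ + ν₂ - n := by omega
      have hK1 : 1 ≤ K := by omega
      have hKT : K ≤ a + b := by omega
      have hrec' := hrec n hnN (s : ℤ) (Int.ofNat_nonneg s) (by exact_mod_cast hs1)
      have hp : max 0 ((ν₁ : ℝ) - (((s : ℕ) : ℤ) : ℝ)) = ((a : ℕ) : ℝ) := by
        have h1 : ((ν₁ : ℝ)) - (((s : ℕ) : ℤ) : ℝ) = ((a : ℕ) : ℝ) := by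
          rw [ha]; push_cast [Nat.cast_sub hs2]; ring
        rw [h1, max_eq_right (by positivity)]
      have hTr : (ν₁ : ℝ) + ν₂ - n = ((a + b : ℕ) : ℝ) := by
        rw [hab]; push_cast [Nat.cast_sub (by omega : n ≤ ν₁ + ν₂)]; ring
      rw [hp, hTr] at hrec'
      have hstep1 : (((a : ℕ) : ℝ) / ((a + b : ℕ) : ℝ)) * ηbar (n+1) ((s : ℤ) + 1)
          = (((a : ℕ) : ℝ) / ((a + b : ℕ) : ℝ)) * ∑ m ∈ Finset.range K,
              η ((s + (m+1) : ℕ) : ℤ) *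
                (((a-1).choose m : ℝ) * ((b.choose (K-1-m) : ℕ) : ℝ) /
                  (((a+b-1).choose (K-1) : ℕ) : ℝ)) := by
        rcases Nat.lt_or_ge s ν₁ with h | h
        · have hih := ih (n+1) (by omega) (s+1) (by omega) (by omega) (by omega)
          have hcast : ((s : ℤ) + 1) = (((s+1 : ℕ)) : ℤ) := by push_cast; ring
          rw [hcast, hih]
          congr 1
          have hr : N - (n+1) + 1 = K := by omega
          rw [hr]
          refine Finset.sum_congr rfl fun m hm => ?_
          have hmK : m < K := Finset.mem_range.mp hm
          have q0 : s + 1 + m = s + (m + 1) := by omega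
          have q1 : ν₁ - (s+1) = a - 1 := by omega
          have q2 : ν₂ - (n+1 - (s+1)) = b := by omega
          have q3 : N - (n+1) - m = K - 1 - m := by omega
          have q4 : ν₁ + ν₂ - (n+1) = a + b - 1 := by omega
          have q5 : N - (n+1) = K - 1 := by omega
          rw [q0, q1, q2, q3, q4, q5]
        · have ha0 : a = 0 := by omega
          rw [ha0]
          simp
      have hstep2 : (1 - ((a : ℕ) : ℝ) / ((a + b : ℕ) : ℝ)) * ηbar (n+1) (s : ℤ)
          = (1 - ((a : ℕ) : ℝ) / ((a + b : ℕ) : ℝ)) * ∑ m ∈ Finset.range K,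
              η ((s + m : ℕ) : ℤ) *
                ((a.choose m : ℝ) * (((b-1).choose (K-1-m) : ℕ) : ℝ) /
                  (((a+b-1).choose (K-1) : ℕ) : ℝ)) := by
        rcases Nat.lt_or_ge (n - s) ν₂ with h | h
        · have hih := ih (n+1) (by omega) s (by omega) hs2 (by omega)
          rw [hih]
          congr 1
          have hr : N - (n+1) + 1 = K := by omega
          rw [hr]
          refine Finset.sum_congr rfl fun m hm => ?_
          have hmK : m < K := Finset.mem_range.mp hm
          have q1 : ν₁ - s = a := rfl
          have q2 : ν₂ - (n+1 - s) = b - 1 := by omega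
          have q3 : N - (n+1) - m = K - 1 - m := by omega
          have q4 : ν₁ + ν₂ - (n+1) = a + b - 1 := by omega
          have q5 : N - (n+1) = K - 1 := by omega
          rw [q2, q3, q4, q5]
        · have hb0 : b = 0 := by omega
          have hane : ((a : ℕ) : ℝ) ≠ 0 := by
            have : 0 < a := by omega
            exact_mod_cast this.ne'
          have : (1 - ((a : ℕ) : ℝ) / ((a + b : ℕ) : ℝ)) = 0 := by
            rw [hb0]; simp [div_self hane]
          rw [this]; ring
      have hTne : ((a + b : ℕ) : ℝ) ≠ 0 := by
        have : 0 < a + b := by omega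
        exact_mod_cast this.ne'
      have hbcoef : (1 - ((a : ℕ) : ℝ) / ((a + b : ℕ) : ℝ)) = ((b : ℕ) : ℝ) / ((a + b : ℕ) : ℝ) := by
        rw [eq_div_iff hTne, sub_mul, div_mul_cancel₀ _ hTne, one_mul]
        push_cast
        ring
      have hyp := hyper_step a b K hK1 hKT (fun m => η ((s + m : ℕ) : ℤ))
      rw [hrec', hstep1, hstep2, hbcoef, hyp, hab]
  have base := main N 0 (by omega) 0 (le_refl 0) (Nat.zero_le _) (by omega)
  simp only [Nat.sub_zero, Nat.zero_add, Int.cast_ofNat_Int, Nat.cast_zero] at base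
  rw [base]
  symm
  refine Finset.sum_subset ?_ ?_
  · intro m hm
    simp only [Finset.mem_Icc, Finset.mem_range] at hm ⊢
    omega
  · intro m hm hnm
    simp only [Finset.mem_Icc, Finset.mem_range, not_and_or, not_le] at hm hnm
    rcases hnm with h | h
    · have : ν₂ < N - m := by omega
      simp [Nat.choose_eq_zero_of_lt this]
    · have : ν₁ < m := by omega
      simp [Nat.choose_eq_zero_of_lt this]
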